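/- If H ≤ G is a coarse stabiliser of a quasi-action of G on a metric space X, then H is commensurated in G: for every g ∈ G, gHg⁻¹ is commensurable to H. -/

import Mathlib

open scoped Pointwise

/-- `f : X → Y` is a `(K,A)`-quasi-isometry. -/
def IsQuasiIsometry {X Y : Type*} [PseudoMetricSpace X] [PseudoMetricSpace Y]
    (K A : ℝ) (f : X → Y) : Prop :=
  (∀ x x' : X, dist x x' / K - A ≤ dist (f x) (f x') ∧
      dist (f x) (f x') ≤ K * dist x x' + A) ∧
    ∀ y : Y, ∃ x : X, dist y (f x) ≤ A

/-- A `(K,A)`-quasi-action of a group `G` on a metric space `X`. -/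
def IsQuasiAction {G X : Type*} [Group G] [PseudoMetricSpace X]
    (K A : ℝ) (φ : G → X → X) : Prop :=
  (∀ g : G, IsQuasiIsometry K A (φ g)) ∧
    (∀ g h : G, ∀ x : X, dist (φ h (φ g x)) (φ (h * g) x) ≤ A) ∧
    ∀ x : X, dist (φ (1 : G) x) x ≤ A

/-- A subset `T ⊆ G` is bounded for the quasi-action `φ` if its quasi-orbits
are bounded. -/
def QABounded {G X : Type*} [Group G] [PseudoMetricSpace X]
    (φ : G → X → X) (T : Set G) : Prop :=
  ∀ x₀ : X, Bornology.IsBounded ((fun t => φ t x₀) '' T)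

/-- `H ≤ G` is a coarse stabiliser of the quasi-action `φ` if `H` is bounded
and every bounded subset of `G` is contained in finitely many left `H`-cosets. -/
def IsCoarseStabiliser {G X : Type*} [Group G] [PseudoMetricSpace X]
    (φ : G → X → X) (H : Subgroup G) : Prop :=
  QABounded φ (H : Set G) ∧
    ∀ T : Set G, QABounded φ T → ∃ F : Finset G, T ⊆ (F : Set G) * (H : Set G)

/-- If `K` is covered by finitely many left `H`-cosets, then `H` has nonzero
relative index in `K`. -/
lemma relIndex_ne_zero_of_cover {G : Type*} [Group G] (H K : Subgroup G)
    (F : Finset G) (hc : (K : Set G) ⊆ (F : Set G) * (H : Set G)) :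
    H.relIndex K ≠ 0 := by
  classical
  have hfin : Finite (K ⧸ H.subgroupOf K) := by
    let f : K ⧸ H.subgroupOf K → G ⧸ H :=
      Quotient.map' Subtype.val (by
        intro a b hab
        rw [QuotientGroup.leftRel_apply] at hab ⊢
        exact hab)
    have hinj : Function.Injective f := by
      intro a b
      induction a using Quotient.inductionOn' with
      | h a =>
      induction b using Quotient.inductionOn' with
      | h b =>
      intro hab
      have : (a : G)⁻¹ * b ∈ H := QuotientGroup.leftRel_apply.mp (Quotient.exact' hab)
      exact Quotient.sound' (QuotientGroup.leftRel_apply.mpr this)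
    have hrange : Set.range f ⊆ QuotientGroup.mk '' (F : Set G) := by
      rintro _ ⟨a, rfl⟩
      induction a using Quotient.inductionOn' with
      | h k =>
      obtain ⟨f₀, hf₀, h₀, hh₀, hk⟩ := hc k.2
      refine ⟨f₀, hf₀, ?_⟩
      show (QuotientGroup.mk f₀ : G ⧸ H) = QuotientGroup.mk (k : G)
      refine QuotientGroup.eq.mpr ?_
      rw [← hk]
      simpa using hh₀
    have : (Set.range f).Finite := (F.finite_toSet.image _).subset hrange
    have : Finite (Set.range f) := this.to_subtype
    exact Finite.of_equiv _ (Equiv.ofInjective f hinj).symm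
  exact Subgroup.index_ne_zero_of_finite

/-- The conjugate of a bounded subgroup is bounded. -/
lemma qabounded_conj {G X : Type*} [Group G] [MetricSpace X]
    (K A : ℝ) (φ : G → X → X) (hφ : IsQuasiAction K A φ)
    (H : Subgroup G) (hHb : QABounded φ (H : Set G)) (g : G) :
    QABounded φ ((Subgroup.map (MulAut.conj g).toMonoidHom H : Subgroup G) : Set G) := by
  intro x₀
  have hA : 0 ≤ A := le_trans dist_nonneg (hφ.2.2 x₀)
  set x₁ := φ g⁻¹ x₀ with hx₁
  obtain ⟨r, hr⟩ := (hHb x₁).subset_closedBall x₁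
  have hr0 : 0 ≤ r := by
    have := hr ⟨(1 : G), H.one_mem, rfl⟩
    exact le_trans dist_nonneg (Metric.mem_closedBall.mp this)
  have hKabs : 0 ≤ |K| := abs_nonneg K
  refine (Metric.isBounded_closedBall
    (x := φ g x₁) (r := A + (|K| * A + A) + (|K| * r + A))).subset ?_
  rintro _ ⟨t, ht, rfl⟩
  obtain ⟨h, hh, rfl⟩ := ht
  have hconj : (MulAut.conj g).toMonoidHom h = g * h * g⁻¹ := rfl
  rw [hconj]
  have d1 : dist (φ (g * h * g⁻¹) x₀) (φ g (φ (h * g⁻¹) x₀)) ≤ A := by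
    have := hφ.2.1 (h * g⁻¹) g x₀
    rw [← mul_assoc] at this
    simpa [dist_comm] using this
  have d2 : dist (φ (h * g⁻¹) x₀) (φ h x₁) ≤ A := by
    have := hφ.2.1 g⁻¹ h x₀
    simpa [dist_comm, hx₁] using this
  have hub := fun (a b : X) => ((hφ.1 g).1 a b).2
  have d3 : dist (φ g (φ (h * g⁻¹) x₀)) (φ g (φ h x₁)) ≤ |K| * A + A := by
    refine (hub _ _).trans ?_
    have hd0 : (0:ℝ) ≤ dist (φ (h * g⁻¹) x₀) (φ h x₁) := dist_nonneg
    nlinarith [le_abs_self K, neg_abs_le K]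
  have d4 : dist (φ h x₁) x₁ ≤ r :=
    Metric.mem_closedBall.mp (hr ⟨h, hh, rfl⟩)
  have d5 : dist (φ g (φ h x₁)) (φ g x₁) ≤ |K| * r + A := by
    refine (hub _ _).trans ?_
    nlinarith [dist_nonneg (x := φ h x₁) (y := x₁), le_abs_self K, neg_abs_le K]
  have := dist_triangle (φ (g * h * g⁻¹) x₀) (φ g (φ (h * g⁻¹) x₀)) (φ g x₁)
  have := dist_triangle (φ g (φ (h * g⁻¹) x₀)) (φ g (φ h x₁)) (φ g x₁)
  rw [Metric.mem_closedBall]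
  linarith

theorem coarseStabiliser_commensurated {G X : Type*} [Group G] [MetricSpace X]
    (K A : ℝ) (φ : G → X → X) (hφ : IsQuasiAction K A φ)
    (H : Subgroup G) (hH : IsCoarseStabiliser φ H) :
    ∀ g : G, Subgroup.Commensurable (Subgroup.map (MulAut.conj g).toMonoidHom H) H := by
  have key : ∀ g' : G,
      H.relIndex (Subgroup.map (MulAut.conj g').toMonoidHom H) ≠ 0 := by
    intro g'
    obtain ⟨F, hF⟩ := hH.2 _ (qabounded_conj K A φ hφ H hH.1 g')
    exact relIndex_ne_zero_of_cover H _ F hF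
  have hcm : ∀ c : G, Subgroup.comap (MulAut.conj c).toMonoidHom H
      = Subgroup.map (MulAut.conj c⁻¹).toMonoidHom H := by
    intro c
    ext x
    simp only [Subgroup.mem_comap, Subgroup.mem_map, MulEquiv.coe_toMonoidHom,
      MulAut.conj_apply]
    constructor
    · intro hx
      exact ⟨c * x * c⁻¹, hx, by group⟩
    · rintro ⟨y, hy, rfl⟩
      simpa [mul_assoc] using hy
  have swap : ∀ c : G,
      (Subgroup.map (MulAut.conj c⁻¹).toMonoidHom H).relIndex H
        = H.relIndex (Subgroup.map (MulAut.conj c).toMonoidHom H) := by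
    intro c
    rw [← hcm c]
    exact Subgroup.relIndex_comap (H := H) ((MulAut.conj c).toMonoidHom) H
  intro g
  constructor
  · have := swap g⁻¹
    rw [inv_inv] at this
    rw [this]
    exact key g⁻¹
  · exact key g
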